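/- Subterm Property: for every closed lambda term M, every Φ-term t with ⌊M⌋ →* t, and every occurrence of a constructor c_{x,N} in t, the lambda term N is a subterm of M. -/

import Mathlib

/-- Pure untyped λ-terms with named variables. -/
inductive Tm : Type
  | var : ℕ → Tm
  | lam : ℕ → Tm → Tm
  | app : Tm → Tm → Tm
deriving DecidableEq

namespace Tm

/-- Free variables. -/
def fv : Tm → Finset ℕ
  | var x => {x}
  | lam x M => fv M \ {x}
  | app M N => fv M ∪ fv N

/-- A term is closed when it has no free variables. -/
def Closed (M : Tm) : Prop := fv M = ∅

/-- Values: variables and abstractions. -/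
def IsValue : Tm → Prop
  | var _ => True
  | lam _ _ => True
  | app _ _ => False

/-- (Naive) substitution `M{N/x}`. -/
def subst : Tm → ℕ → Tm → Tm
  | var y, x, N => if y = x then N else var y
  | lam y P, x, N => if y = x then lam y P else lam y (subst P x N)
  | app P Q, x, N => app (subst P x N) (subst Q x N)

/-- Weak call-by-value reduction: β-redexes whose argument is a value,
closed under both application contexts, never under λ. -/
inductive Cbv : Tm → Tm → Prop
  | beta {x M V} : IsValue V → Cbv (app (lam x M) V) (subst M x V)
  | appL {M N L} : Cbv M N → Cbv (app M L) (app N L)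
  | appR {M N L} : Cbv M N → Cbv (app L M) (app L N)

/-- The subterm relation on λ-terms. -/
inductive Sub : Tm → Tm → Prop
  | refl (M) : Sub M M
  | lam {M N x} : Sub M N → Sub M (lam x N)
  | appL {M N L} : Sub M N → Sub M (app N L)
  | appR {M N L} : Sub M L → Sub M (app N L)

end Tm

/-- `M N₁ … Nₖ` (left-nested application). -/
def appList : Tm → List Tm → Tm := List.foldl Tm.app

/-- `λx₁.…λxₖ.M`. -/
def lams : List ℕ → Tm → Tm := fun xs M => xs.foldr Tm.lam M

/-- `stepsN R n a b`: `a` reduces to `b` in exactly `n` `R`-steps. -/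
def stepsN {α : Type*} (R : α → α → Prop) : ℕ → α → α → Prop
  | 0, a, b => a = b
  | n + 1, a, b => ∃ c, R a c ∧ stepsN R n c b

/-- `a` is an `R`-normal form. -/
def NormalForm {α : Type*} (R : α → α → Prop) (a : α) : Prop := ¬ ∃ b, R a b

/-- Terms of the constructor rewrite system Φ: variables, the binary function
symbol `app`, and a constructor `c_{x,M}` for each variable `x` and λ-term `M`. -/
inductive PTm : Type
  | pvar : ℕ → PTm
  | papp : PTm → PTm → PTm
  | con : ℕ → Tm → List PTm → PTm

namespace PTm

/-- The (sorted) list of free variables of a λ-term. -/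
def fvList (M : Tm) : List ℕ := (Tm.fv M).sort (· ≤ ·)

/-- The translation `⌊·⌋` from λ-terms to Φ-terms. -/
def toP : Tm → PTm
  | .var x => pvar x
  | .lam x M => con x M ((fvList (Tm.lam x M)).map pvar)
  | .app M N => papp (toP M) (toP N)

/-- Simultaneous (sequential, for closed arguments) λ-substitution `M{Nᵢ/xᵢ}`. -/
def substList (M : Tm) (xs : List ℕ) (Ns : List Tm) : Tm :=
  (xs.zip Ns).foldl (fun acc p => Tm.subst acc p.1 p.2) M

/-- The readback `⌈·⌉` from Φ-terms to λ-terms. -/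
def toL : PTm → Tm
  | pvar x => .var x
  | papp u v => .app (toL u) (toL v)
  | con x M ts =>
      substList (Tm.lam x M) (fvList (Tm.lam x M)) (ts.attach.map fun t => toL t.1)
termination_by t => sizeOf t
decreasing_by all_goals first
  | (simp_wf; have := List.sizeOf_lt_of_mem t.2; omega)
  | (simp_wf; omega)
  | simp_wf

/-- First-order substitution on Φ-terms. -/
def psubst : PTm → ℕ → PTm → PTm
  | pvar y, x, N => if y = x then N else pvar y
  | papp u v, x, N => papp (psubst u x N) (psubst v x N)
  | con y M ts, x, N => con y M (ts.attach.map fun t => psubst t.1 x N)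
termination_by t _ _ => sizeOf t
decreasing_by all_goals first
  | (simp_wf; have := List.sizeOf_lt_of_mem t.2; omega)
  | (simp_wf; omega)
  | simp_wf

/-- Simultaneous (sequential, for ground arguments) substitution on Φ-terms. -/
def psubstList (t : PTm) (xs : List ℕ) (us : List PTm) : PTm :=
  (xs.zip us).foldl (fun acc p => psubst acc p.1 p.2) t

/-- Constructor terms of Φ: ground terms built from constructors only. -/
inductive IsConT : PTm → Prop
  | con {x M ts} : (∀ t ∈ ts, IsConT t) → IsConT (con x M ts)

/-- Well-formed Φ-terms: every constructor `c_{x,M}` gets exactly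
`|FV(λx.M)|` arguments. -/
inductive WF : PTm → Prop
  | pvar (x) : WF (pvar x)
  | papp {u v} : WF u → WF v → WF (papp u v)
  | con {x M ts} : ts.length = (fvList (Tm.lam x M)).length →
      (∀ t ∈ ts, WF t) → WF (con x M ts)

/-- Canonical closed Φ-terms: constructor terms, or `app` of canonical terms. -/
inductive Canonical : PTm → Prop
  | ofCon {t} : IsConT t → Canonical t
  | papp {u v} : Canonical u → Canonical v → Canonical (papp u v)

/-- Call-by-value rewriting in Φ: the rules are
`app(c_{x,M}(x₁,…,xₙ), x) → ⌊M⌋` (with `FV(λx.M) = x₁,…,xₙ`), matched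
variables are instantiated by constructor terms, and rewriting is closed
under arbitrary contexts. -/
inductive Step : PTm → PTm → Prop
  | beta {x : ℕ} {M : Tm} {ts : List PTm} {v : PTm} :
      (∀ t ∈ ts, IsConT t) → IsConT v →
      ts.length = (fvList (Tm.lam x M)).length →
      Step (papp (con x M ts) v)
        (psubstList (toP M) (fvList (Tm.lam x M) ++ [x]) (ts ++ [v]))
  | appL {u u' v} : Step u u' → Step (papp u v) (papp u' v)
  | appR {u v v'} : Step v v' → Step (papp u v) (papp u v')
  | conArg {x M t t' l r} : Step t t' →
      Step (con x M (l ++ t :: r)) (con x M (l ++ t' :: r))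

/-- Variables occurring in a Φ-term. -/
def pvarsOf : PTm → Finset ℕ
  | pvar x => {x}
  | papp u v => pvarsOf u ∪ pvarsOf v
  | con _ _ ts => ts.attach.foldr (fun t s => pvarsOf t.1 ∪ s) ∅
termination_by t => sizeOf t
decreasing_by all_goals first
  | (simp_wf; have := List.sizeOf_lt_of_mem t.2; omega)
  | (simp_wf; omega)
  | simp_wf

/-- The subterm relation on Φ-terms. -/
inductive PSub : PTm → PTm → Prop
  | refl (t) : PSub t t
  | appL {t u v} : PSub t u → PSub t (papp u v)
  | appR {t u v} : PSub t v → PSub t (papp u v)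
  | conArg {t u x M ts} : u ∈ ts → PSub t u → PSub t (con x M ts)

end PTm

namespace PTm

/-- Occurrence of a constructor with body `N` in a Φ-term. -/
def Occ (N : Tm) (t : PTm) : Prop := ∃ x ts, PSub (con x N ts) t

lemma Occ.appL' {N u v} (h : Occ N u) : Occ N (papp u v) := by
  obtain ⟨x, ts, h⟩ := h; exact ⟨x, ts, .appL h⟩

lemma Occ.appR' {N u v} (h : Occ N v) : Occ N (papp u v) := by
  obtain ⟨x, ts, h⟩ := h; exact ⟨x, ts, .appR h⟩

lemma Occ.conArg' {N u x M ts} (hm : u ∈ ts) (h : Occ N u) : Occ N (con x M ts) := by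
  obtain ⟨x', ss, h⟩ := h; exact ⟨x', ss, .conArg hm h⟩

lemma sub_trans {a b c : Tm} (hab : Tm.Sub a b) (hbc : Tm.Sub b c) : Tm.Sub a c := by
  induction hbc with
  | refl => exact hab
  | lam _ ih => exact .lam ih
  | appL _ ih => exact .appL ih
  | appR _ ih => exact .appR ih

lemma occ_psubst_aux {c w} (h : PSub c w) : ∀ x N ss, c = con x N ss →
    ∀ u y s, w = psubst u y s → Occ N u ∨ Occ N s := by
  induction h with
  | refl =>
    rintro x N ss rfl u y s ht
    match u with
    | pvar z =>
      simp only [psubst] at ht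
      split at ht
      · exact Or.inr ⟨x, ss, ht ▸ PSub.refl _⟩
      · exact absurd ht (by simp)
    | papp a b => simp [psubst] at ht
    | con z M ts =>
      simp only [psubst, PTm.con.injEq] at ht
      obtain ⟨rfl, rfl, -⟩ := ht
      exact Or.inl ⟨_, ts, PSub.refl _⟩
  | appL h ih =>
    rintro x N ss rfl u y s ht
    match u with
    | pvar z =>
      simp only [psubst] at ht
      split at ht
      · exact Or.inr ⟨x, ss, ht ▸ PSub.appL h⟩
      · exact absurd ht (by simp)
    | papp a b =>
      simp only [psubst, PTm.papp.injEq] at ht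
      rcases ih x N ss rfl a y s ht.1 with h' | h'
      · exact Or.inl h'.appL'
      · exact Or.inr h'
    | con z M ts => simp [psubst] at ht
  | appR h ih =>
    rintro x N ss rfl u y s ht
    match u with
    | pvar z =>
      simp only [psubst] at ht
      split at ht
      · exact Or.inr ⟨x, ss, ht ▸ PSub.appR h⟩
      · exact absurd ht (by simp)
    | papp a b =>
      simp only [psubst, PTm.papp.injEq] at ht
      rcases ih x N ss rfl b y s ht.2 with h' | h'
      · exact Or.inl h'.appR'
      · exact Or.inr h'
    | con z M ts => simp [psubst] at ht
  | conArg hm h ih =>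
    rintro x N ss rfl u y s ht
    match u with
    | pvar z =>
      simp only [psubst] at ht
      split at ht
      · exact Or.inr ⟨x, ss, ht ▸ PSub.conArg hm h⟩
      · exact absurd ht (by simp)
    | papp a b => simp [psubst] at ht
    | con z M ts =>
      simp only [psubst, PTm.con.injEq] at ht
      obtain ⟨rfl, rfl, hts⟩ := ht
      rw [hts] at hm
      simp only [List.mem_map, List.mem_attach, true_and, Subtype.exists] at hm
      obtain ⟨t, htm, rfl⟩ := hm
      rcases ih x N ss rfl t y s rfl with h' | h'
      · exact Or.inl (h'.conArg' htm)
      · exact Or.inr h'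

lemma occ_psubst {N u y s} (h : Occ N (psubst u y s)) : Occ N u ∨ Occ N s := by
  obtain ⟨x, ss, h⟩ := h
  exact occ_psubst_aux h x N ss rfl u y s rfl

lemma occ_foldl (l : List (ℕ × PTm)) : ∀ t N,
    Occ N (l.foldl (fun acc p => psubst acc p.1 p.2) t) →
    Occ N t ∨ ∃ p ∈ l, Occ N p.2 := by
  induction l with
  | nil => intro t N h; exact Or.inl h
  | cons p l ih =>
    intro t N h
    rcases ih _ _ h with h' | ⟨q, hq, hoq⟩
    · rcases occ_psubst h' with h'' | h''
      · exact Or.inl h''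
      · exact Or.inr ⟨p, List.mem_cons_self, h''⟩
    · exact Or.inr ⟨q, List.mem_cons_of_mem _ hq, hoq⟩

lemma occ_psubstList {N t xs us} (h : Occ N (psubstList t xs us)) :
    Occ N t ∨ ∃ u ∈ us, Occ N u := by
  rcases occ_foldl _ _ _ h with h' | ⟨p, hp, hop⟩
  · exact Or.inl h'
  · exact Or.inr ⟨p.2, (List.of_mem_zip hp).2, hop⟩

lemma occ_toP {P N} (h : Occ N (toP P)) : Tm.Sub N P := by
  induction P generalizing N with
  | var z =>
    obtain ⟨x, ss, h⟩ := h
    cases h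
  | lam y Q ih =>
    obtain ⟨x, ss, h⟩ := h
    simp only [toP] at h
    cases h with
    | refl => exact .lam (.refl _)
    | conArg hm h' =>
      simp only [List.mem_map] at hm
      obtain ⟨z, -, rfl⟩ := hm
      cases h'
  | app P Q ihP ihQ =>
    obtain ⟨x, ss, h⟩ := h
    simp only [toP] at h
    cases h with
    | appL h' => exact .appL (ihP ⟨x, ss, h'⟩)
    | appR h' => exact .appR (ihQ ⟨x, ss, h'⟩)

lemma step_occ {t t'} (h : Step t t') : ∀ N, Occ N t' →
    Occ N t ∨ ∃ P, Occ P t ∧ Tm.Sub N P := by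
  induction h with
  | @beta x M ts v _ _ _ =>
    intro N ho
    rcases occ_psubstList ho with h' | ⟨u, hu, hou⟩
    · exact Or.inr ⟨M, ⟨x, ts, .appL (.refl _)⟩, occ_toP h'⟩
    · rcases List.mem_append.1 hu with hu' | hu'
      · exact Or.inl (Occ.appL' (hou.conArg' hu'))
      · simp only [List.mem_singleton] at hu'
        subst hu'
        exact Or.inl hou.appR'
  | @appL u u' v _ ih =>
    intro N ho
    obtain ⟨x, ss, hps⟩ := ho
    cases hps with
    | appL h' =>
      rcases ih N ⟨x, ss, h'⟩ with h'' | ⟨P, hP, hNP⟩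
      · exact Or.inl h''.appL'
      · exact Or.inr ⟨P, hP.appL', hNP⟩
    | appR h' => exact Or.inl (Occ.appR' ⟨x, ss, h'⟩)
  | @appR u v v' _ ih =>
    intro N ho
    obtain ⟨x, ss, hps⟩ := ho
    cases hps with
    | appL h' => exact Or.inl (Occ.appL' ⟨x, ss, h'⟩)
    | appR h' =>
      rcases ih N ⟨x, ss, h'⟩ with h'' | ⟨P, hP, hNP⟩
      · exact Or.inl h''.appR'
      · exact Or.inr ⟨P, hP.appR', hNP⟩
  | @conArg y Q s s' l r _ ih =>
    intro N ho
    obtain ⟨x, ss, hps⟩ := ho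
    cases hps with
    | refl => exact Or.inr ⟨Q, ⟨y, l ++ s :: r, .refl _⟩, .refl _⟩
    | @conArg u _ _ _ hm h' =>
      rcases List.mem_append.1 hm with hu | hu
      · exact Or.inl (Occ.conArg' (List.mem_append_left _ hu) ⟨x, ss, h'⟩)
      · rcases List.mem_cons.1 hu with rfl | hu'
        · rcases ih N ⟨x, ss, h'⟩ with h'' | ⟨P, hP, hNP⟩
          · exact Or.inl (h''.conArg' (by simp))
          · exact Or.inr ⟨P, hP.conArg' (by simp), hNP⟩
        · exact Or.inl (Occ.conArg' (by simp [hu']) ⟨x, ss, h'⟩)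

lemma rtg_occ {M t} (h : Relation.ReflTransGen PTm.Step (PTm.toP M) t) :
    ∀ N', Occ N' t → Tm.Sub N' M := by
  induction h with
  | refl => exact fun _ h' => occ_toP h'
  | tail _ hstep ih =>
    intro N' h'
    rcases step_occ hstep N' h' with h'' | ⟨P, hP, hNP⟩
    · exact ih N' h''
    · exact sub_trans hNP (ih P hP)

end PTm

/-- Subterm Property: for every closed λ-term `M`, every
Φ-term `t` with `⌊M⌋ →* t`, and every occurrence of a constructor `c_{x,N}`
in `t`, the λ-term `N` is a subterm of `M`. -/
theorem subterm_property (M : Tm) (hM : Tm.Closed M) (t : PTm)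
    (h : Relation.ReflTransGen PTm.Step (PTm.toP M) t)
    (x : ℕ) (N : Tm) (ts : List PTm) (hocc : PTm.PSub (PTm.con x N ts) t) :
    Tm.Sub N M :=
  PTm.rtg_occ h N ⟨x, ts, hocc⟩
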